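/- arXiv:1501.07431 — 2 statements merged into one kernel-verified Lean document; each statement's English description precedes it below -/
import Mathlib

section
/- Let R be a finite commutative local ring with maximal ideal M and residue map μ: R[x] → (R/M)[x]. A polynomial f(x) ∈ R[x] is regular (not a zero divisor) if and only if μ(f(x)) ≠ 0. -/
open Polynomial

theorem stmt_5 (R : Type*) [CommRing R] [IsLocalRing R] [Finite R] (f : R[X]) :
    f ∈ nonZeroDivisors R[X] ↔
      f.map (Ideal.Quotient.mk (IsLocalRing.maximalIdeal R)) ≠ 0 := by
  classical
  set M := IsLocalRing.maximalIdeal R with hM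
  constructor
  · intro hf hmap
    -- all coefficients of f lie in M
    have hcoeff : ∀ i, f.coeff i ∈ M := by
      intro i
      have := congrArg (fun p => Polynomial.coeff p i) hmap
      simp only [coeff_map, coeff_zero] at this
      exact (Ideal.Quotient.eq_zero_iff_mem).1 this
    have hnil : IsNilpotent M := by
      have : IsNilpotent (Ideal.jacobson (⊥ : Ideal R)) :=
        IsArtinianRing.isNilpotent_jacobson_bot
      rwa [IsLocalRing.jacobson_eq_maximalIdeal (⊥ : Ideal R) bot_ne_top] at this
    obtain ⟨n, hn⟩ := hnil
    have hfind : ∃ n, M ^ n = 0 := ⟨n, hn⟩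
    set k := Nat.find hfind with hk
    have hk0 : k ≠ 0 := by
      intro h
      have := Nat.find_spec hfind
      rw [← hk, h, pow_zero] at this
      have h1 : (1 : R) ∈ (1 : Ideal R) := by rw [Ideal.one_eq_top]; exact Submodule.mem_top
      rw [this] at h1
      rw [Ideal.zero_eq_bot, Ideal.mem_bot] at h1
      exact one_ne_zero h1
    have hklt : M ^ (k - 1) ≠ 0 := by
      have := Nat.find_min hfind (m := k - 1) (by omega)
      simpa using this
    obtain ⟨r, hrM, hr0⟩ := Submodule.ne_bot_iff _ |>.1 hklt
    have hrf : C r * f = 0 := by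
      ext i
      rw [coeff_C_mul, coeff_zero]
      have : r * f.coeff i ∈ M ^ (k - 1) * M := Ideal.mul_mem_mul hrM (hcoeff i)
      have h2 : M ^ (k - 1) * M = M ^ k := by
        rw [← pow_succ]; congr 1; omega
      rw [h2, Nat.find_spec hfind] at this
      simpa using this
    have := mem_nonZeroDivisors_iff_right.1 hf (C r) hrf
    rw [C_eq_zero] at this
    exact hr0 this
  · intro hne
    rw [Polynomial.mem_nonZeroDivisors_iff]
    intro a ha
    obtain ⟨i, hi⟩ : ∃ i, (f.map (Ideal.Quotient.mk M)).coeff i ≠ 0 := by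
      by_contra h
      push_neg at h
      exact hne (Polynomial.ext fun i => by simpa using h i)
    rw [coeff_map, Ne, Ideal.Quotient.eq_zero_iff_mem] at hi
    have hu : IsUnit (f.coeff i) := by
      by_contra h
      exact hi (IsLocalRing.mem_maximalIdeal _ |>.2 h)
    have : a * f.coeff i = 0 := by
      have := congrArg (fun p => Polynomial.coeff p i) ha
      simpa [coeff_smul, smul_eq_mul] using this
    obtain ⟨u, hu⟩ := hu
    have : a * (u : R) = 0 := by rw [hu]; exact this
    calc a = a * u * u⁻¹ := by rw [mul_assoc]; simp
    _ = 0 := by rw [this]; simp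
end

section
/- Let p be an odd prime and R = F_p[u,v]/⟨u², v², uv-vu⟩. Every ideal of R is one of: {0}, ⟨u⟩, ⟨v⟩, ⟨uv⟩, ⟨u + αv⟩ for some nonzero α ∈ F_p, ⟨u, v⟩, or R itself. -/
open MvPolynomial

/-- The ring `F_p[u,v]/⟨u², v², uv - vu⟩`. -/
abbrev Rpuv (p : ℕ) : Type :=
  MvPolynomial (Fin 2) (ZMod p) ⧸
    Ideal.span {(X 0 : MvPolynomial (Fin 2) (ZMod p)) ^ 2, X 1 ^ 2, X 0 * X 1 - X 1 * X 0}

namespace Stmt8Aux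

set_option maxHeartbeats 2000000
set_option synthInstance.maxHeartbeats 1000000

noncomputable instance instCR (p : ℕ) : CommRing (DualNumber (DualNumber (ZMod p))) :=
  inferInstance

noncomputable instance instAlg (p : ℕ) : Algebra (ZMod p) (DualNumber (DualNumber (ZMod p))) :=
  inferInstance

variable (p : ℕ)

noncomputable def uu : Rpuv p := Ideal.Quotient.mk _ (X 0)
noncomputable def vv : Rpuv p := Ideal.Quotient.mk _ (X 1)

lemma uu_sq : uu p ^ 2 = 0 := by
  rw [uu, ← map_pow, Ideal.Quotient.eq_zero_iff_mem]
  exact Ideal.subset_span (by simp)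

lemma vv_sq : vv p ^ 2 = 0 := by
  rw [vv, ← map_pow, Ideal.Quotient.eq_zero_iff_mem]
  exact Ideal.subset_span (by simp)

noncomputable def phi : Rpuv p →ₐ[ZMod p] DualNumber (DualNumber (ZMod p)) :=
  Ideal.Quotient.liftₐ _
    (MvPolynomial.aeval (![DualNumber.eps, TrivSqZeroExt.inl DualNumber.eps] : Fin 2 → DualNumber (DualNumber (ZMod p))))
    (by
      intro a ha
      have h : Ideal.span ({(X 0 : MvPolynomial (Fin 2) (ZMod p)) ^ 2, X 1 ^ 2,
          X 0 * X 1 - X 1 * X 0} : Set (MvPolynomial (Fin 2) (ZMod p))) ≤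
          RingHom.ker (MvPolynomial.aeval
            (![DualNumber.eps, TrivSqZeroExt.inl DualNumber.eps] : Fin 2 → DualNumber (DualNumber (ZMod p)))).toRingHom := by
        rw [Ideal.span_le]
        rintro x hx
        simp only [Set.mem_insert_iff, Set.mem_singleton_iff] at hx
        rcases hx with rfl | rfl | rfl
        · show _ ∈ RingHom.ker _
          rw [RingHom.mem_ker, AlgHom.toRingHom_eq_coe, RingHom.coe_coe, map_pow, aeval_X]
          show DualNumber.eps ^ 2 = 0
          rw [sq, DualNumber.eps_mul_eps]
        · show _ ∈ RingHom.ker _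
          rw [RingHom.mem_ker, AlgHom.toRingHom_eq_coe, RingHom.coe_coe, map_pow, aeval_X]
          show TrivSqZeroExt.inl DualNumber.eps ^ 2 = 0
          rw [sq, TrivSqZeroExt.inl_mul_inl, DualNumber.eps_mul_eps,
            TrivSqZeroExt.inl_zero]
        · show _ ∈ RingHom.ker _
          rw [RingHom.mem_ker, AlgHom.toRingHom_eq_coe, RingHom.coe_coe, map_sub, map_mul,
            map_mul, mul_comm, sub_self]
      exact h ha)

lemma phi_uu : phi p (uu p) = DualNumber.eps := by
  erw [phi, uu, Ideal.Quotient.liftₐ_apply, Ideal.Quotient.lift_mk]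
  simp

lemma phi_vv : phi p (vv p) = TrivSqZeroExt.inl DualNumber.eps := by
  erw [phi, vv, Ideal.Quotient.liftₐ_apply, Ideal.Quotient.lift_mk]
  simp

lemma mk_C (a : ZMod p) :
    (Ideal.Quotient.mk _ (C a : MvPolynomial (Fin 2) (ZMod p)) : Rpuv p)
      = algebraMap (ZMod p) (Rpuv p) a := by
  rw [← MvPolynomial.algebraMap_eq, Ideal.Quotient.mk_algebraMap]

lemma uvu : uu p * vv p * uu p = 0 := by
  linear_combination vv p * uu_sq p

lemma uvv : uu p * vv p * vv p = 0 := by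
  linear_combination uu p * vv_sq p

lemma repr_exists (x : Rpuv p) : ∃ a b c d : ZMod p,
    x = algebraMap (ZMod p) (Rpuv p) a + algebraMap (ZMod p) (Rpuv p) b * uu p
      + algebraMap (ZMod p) (Rpuv p) c * vv p
      + algebraMap (ZMod p) (Rpuv p) d * (uu p * vv p) := by
  obtain ⟨f, rfl⟩ := Ideal.Quotient.mk_surjective x
  induction f using MvPolynomial.induction_on with
  | C a => exact ⟨a, 0, 0, 0, by simp [mk_C]⟩
  | add f g hf hg =>
    obtain ⟨a, b, c, d, hf⟩ := hf
    obtain ⟨a', b', c', d', hg⟩ := hg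
    refine ⟨a + a', b + b', c + c', d + d', ?_⟩
    rw [map_add, hf, hg]
    simp only [map_add]
    ring
  | mul_X f i hf =>
    obtain ⟨a, b, c, d, h⟩ := hf
    rw [map_mul]
    have hXi : (Ideal.Quotient.mk _ (X i) : Rpuv p) = uu p ∨
        (Ideal.Quotient.mk _ (X i) : Rpuv p) = vv p := by
      fin_cases i
      · exact Or.inl rfl
      · exact Or.inr rfl
    rcases hXi with hX | hX
    · refine ⟨0, a, 0, c, ?_⟩
      rw [hX, map_zero]
      linear_combination uu p * h + (algebraMap (ZMod p) (Rpuv p) b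
        + algebraMap (ZMod p) (Rpuv p) d * vv p) * uu_sq p
    · refine ⟨0, 0, a, b, ?_⟩
      rw [hX, map_zero]
      linear_combination vv p * h + (algebraMap (ZMod p) (Rpuv p) c
        + algebraMap (ZMod p) (Rpuv p) d * uu p) * vv_sq p

noncomputable def co1 (x : Rpuv p) : ZMod p := ((phi p x).fst).fst
noncomputable def co2 (x : Rpuv p) : ZMod p := ((phi p x).snd).fst
noncomputable def co3 (x : Rpuv p) : ZMod p := ((phi p x).fst).snd
noncomputable def co4 (x : Rpuv p) : ZMod p := ((phi p x).snd).snd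

lemma co_combo (a b c d : ZMod p) :
    co1 p (algebraMap (ZMod p) (Rpuv p) a + algebraMap (ZMod p) (Rpuv p) b * uu p
      + algebraMap (ZMod p) (Rpuv p) c * vv p
      + algebraMap (ZMod p) (Rpuv p) d * (uu p * vv p)) = a
    ∧ co2 p (algebraMap (ZMod p) (Rpuv p) a + algebraMap (ZMod p) (Rpuv p) b * uu p
      + algebraMap (ZMod p) (Rpuv p) c * vv p
      + algebraMap (ZMod p) (Rpuv p) d * (uu p * vv p)) = b
    ∧ co3 p (algebraMap (ZMod p) (Rpuv p) a + algebraMap (ZMod p) (Rpuv p) b * uu p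
      + algebraMap (ZMod p) (Rpuv p) c * vv p
      + algebraMap (ZMod p) (Rpuv p) d * (uu p * vv p)) = c
    ∧ co4 p (algebraMap (ZMod p) (Rpuv p) a + algebraMap (ZMod p) (Rpuv p) b * uu p
      + algebraMap (ZMod p) (Rpuv p) c * vv p
      + algebraMap (ZMod p) (Rpuv p) d * (uu p * vv p)) = d := by
  refine ⟨?_, ?_, ?_, ?_⟩ <;>
    simp [co1, co2, co3, co4, phi_uu, phi_vv, map_add, map_mul, AlgHom.commutes,
      TrivSqZeroExt.algebraMap_eq_inl', TrivSqZeroExt.fst_add, TrivSqZeroExt.snd_add,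
      TrivSqZeroExt.fst_mul, TrivSqZeroExt.snd_mul, TrivSqZeroExt.fst_inl,
      TrivSqZeroExt.snd_inl, DualNumber.fst_eps, DualNumber.snd_eps,
      TrivSqZeroExt.snd_smul, TrivSqZeroExt.fst_smul, smul_eq_mul]

lemma co_spec (x : Rpuv p) :
    x = algebraMap (ZMod p) (Rpuv p) (co1 p x) + algebraMap (ZMod p) (Rpuv p) (co2 p x) * uu p
      + algebraMap (ZMod p) (Rpuv p) (co3 p x) * vv p
      + algebraMap (ZMod p) (Rpuv p) (co4 p x) * (uu p * vv p) := by
  obtain ⟨a, b, c, d, h⟩ := repr_exists p x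
  obtain ⟨h1, h2, h3, h4⟩ := co_combo p a b c d
  rw [← h] at h1 h2 h3 h4
  rw [h1, h2, h3, h4]
  exact h

lemma sq_eq (x y z : Rpuv p) :
    (x * uu p + y * vv p + z * (uu p * vv p))^2 = 2*x*y*(uu p * vv p) := by
  linear_combination (x^2 + 2*x*z*vv p + z^2*(vv p)^2) * uu_sq p
    + (y^2 + 2*y*z*uu p) * vv_sq p

lemma uvn (x y z : Rpuv p) :
    (uu p * vv p) * (x * uu p + y * vv p + z * (uu p * vv p)) = 0 := by
  linear_combination (x*vv p + z*(vv p)^2) * uu_sq p + (y*uu p) * vv_sq p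

lemma cube_zero (x y z : Rpuv p) :
    (x * uu p + y * vv p + z * (uu p * vv p))^3 = 0 := by
  calc (x * uu p + y * vv p + z * (uu p * vv p))^3
      = (x * uu p + y * vv p + z * (uu p * vv p))^2
        * (x * uu p + y * vv p + z * (uu p * vv p)) := by ring
    _ = 2*x*y*((uu p * vv p) * (x * uu p + y * vv p + z * (uu p * vv p))) := by
        rw [sq_eq]; ring
    _ = 0 := by rw [uvn, mul_zero]

end Stmt8Aux

set_option maxHeartbeats 2000000
set_option synthInstance.maxHeartbeats 1000000
open Stmt8Aux in
theorem stmt_8 (p : ℕ) (hp : p.Prime) (hodd : Odd p)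
    (u v : Rpuv p)
    (hu : u = Ideal.Quotient.mk _ (X 0)) (hv : v = Ideal.Quotient.mk _ (X 1))
    (I : Ideal (Rpuv p)) :
    I = ⊥ ∨ I = Ideal.span {u} ∨ I = Ideal.span {v} ∨ I = Ideal.span {u * v} ∨
      (∃ α : ZMod p, α ≠ 0 ∧ I = Ideal.span {u + algebraMap (ZMod p) (Rpuv p) α * v}) ∨
      I = Ideal.span {u, v} ∨ I = ⊤ := by
  haveI : Fact p.Prime := ⟨hp⟩
  have hu' : u = uu p := hu
  have hv' : v = vv p := hv
  subst hu' hv'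
  clear hu hv hodd
  by_cases hT : ∃ x ∈ I, co1 p x ≠ 0
  · -- I = ⊤
    obtain ⟨x, hxI, ha⟩ := hT
    refine Or.inr (Or.inr (Or.inr (Or.inr (Or.inr (Or.inr ?_)))))
    have hx2 : x = algebraMap (ZMod p) (Rpuv p) (co1 p x)
        + (algebraMap (ZMod p) (Rpuv p) (co2 p x) * uu p
          + algebraMap (ZMod p) (Rpuv p) (co3 p x) * vv p
          + algebraMap (ZMod p) (Rpuv p) (co4 p x) * (uu p * vv p)) := by
      linear_combination co_spec p x
    have hnil : IsNilpotent (algebraMap (ZMod p) (Rpuv p) (co2 p x) * uu p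
          + algebraMap (ZMod p) (Rpuv p) (co3 p x) * vv p
          + algebraMap (ZMod p) (Rpuv p) (co4 p x) * (uu p * vv p)) :=
      ⟨3, cube_zero p _ _ _⟩
    have hunit : IsUnit x := by
      rw [hx2]
      exact IsNilpotent.isUnit_add_left_of_commute hnil
        ((isUnit_iff_ne_zero.mpr ha).map (algebraMap (ZMod p) (Rpuv p)))
        (Commute.all _ _)
    exact Ideal.eq_top_of_isUnit_mem I hxI hunit
  · push_neg at hT
    by_cases hbc : ∃ x ∈ I, co2 p x ≠ 0 ∨ co3 p x ≠ 0
    · obtain ⟨x₀, hx₀I, hbc₀⟩ := hbc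
      have hx₀ := co_spec p x₀
      set b₀ := co2 p x₀ with hb₀def
      set c₀ := co3 p x₀ with hc₀def
      set d₀ := co4 p x₀ with hd₀def
      rw [hT x₀ hx₀I, map_zero, zero_add] at hx₀
      -- hx₀ : x₀ = alg b₀ * U + alg c₀ * V + alg d₀ * (U*V)
      have hUV : uu p * vv p ∈ I := by
        rcases hbc₀ with hb | hc
        · have h1 : x₀ * vv p ∈ I := I.mul_mem_right _ hx₀I
          have h2 : x₀ * vv p = algebraMap (ZMod p) (Rpuv p) b₀ * (uu p * vv p) := by
            rw [hx₀]
            linear_combination (algebraMap (ZMod p) (Rpuv p) c₀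
              + algebraMap (ZMod p) (Rpuv p) d₀ * uu p) * vv_sq p
          have h3 := I.mul_mem_left (algebraMap (ZMod p) (Rpuv p) b₀⁻¹) h1
          rwa [h2, ← mul_assoc, ← map_mul, inv_mul_cancel₀ hb, map_one, one_mul] at h3
        · have h1 : x₀ * uu p ∈ I := I.mul_mem_right _ hx₀I
          have h2 : x₀ * uu p = algebraMap (ZMod p) (Rpuv p) c₀ * (uu p * vv p) := by
            rw [hx₀]
            linear_combination (algebraMap (ZMod p) (Rpuv p) b₀
              + algebraMap (ZMod p) (Rpuv p) d₀ * vv p) * uu_sq p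
          have h3 := I.mul_mem_left (algebraMap (ZMod p) (Rpuv p) c₀⁻¹) h1
          rwa [h2, ← mul_assoc, ← map_mul, inv_mul_cancel₀ hc, map_one, one_mul] at h3
      have hy₀ : algebraMap (ZMod p) (Rpuv p) b₀ * uu p
          + algebraMap (ZMod p) (Rpuv p) c₀ * vv p ∈ I := by
        have h4 := I.sub_mem hx₀I (I.mul_mem_left (algebraMap (ZMod p) (Rpuv p) d₀) hUV)
        have h5 : x₀ - algebraMap (ZMod p) (Rpuv p) d₀ * (uu p * vv p)
            = algebraMap (ZMod p) (Rpuv p) b₀ * uu p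
              + algebraMap (ZMod p) (Rpuv p) c₀ * vv p := by
          rw [hx₀]; ring
        rwa [h5] at h4
      by_cases hpar : ∃ x ∈ I, b₀ * co3 p x - co2 p x * c₀ ≠ 0
      · -- I = span {u, v}
        obtain ⟨x₁, hx₁I, hdet⟩ := hpar
        have hx₁ := co_spec p x₁
        set b₁ := co2 p x₁ with hb₁def
        set c₁ := co3 p x₁ with hc₁def
        set d₁ := co4 p x₁ with hd₁def
        rw [hT x₁ hx₁I, map_zero, zero_add] at hx₁
        have hy₁ : algebraMap (ZMod p) (Rpuv p) b₁ * uu p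
            + algebraMap (ZMod p) (Rpuv p) c₁ * vv p ∈ I := by
          have h4 := I.sub_mem hx₁I (I.mul_mem_left (algebraMap (ZMod p) (Rpuv p) d₁) hUV)
          have h5 : x₁ - algebraMap (ZMod p) (Rpuv p) d₁ * (uu p * vv p)
              = algebraMap (ZMod p) (Rpuv p) b₁ * uu p
                + algebraMap (ZMod p) (Rpuv p) c₁ * vv p := by
            rw [hx₁]; ring
          rwa [h5] at h4
        have hdet' : b₀ * c₁ - b₁ * c₀ ≠ 0 := hdet
        have hUI : uu p ∈ I := by
          have h6 := I.sub_mem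
            (I.mul_mem_left (algebraMap (ZMod p) (Rpuv p) c₁) hy₀)
            (I.mul_mem_left (algebraMap (ZMod p) (Rpuv p) c₀) hy₁)
          have h7 : algebraMap (ZMod p) (Rpuv p) c₁
                * (algebraMap (ZMod p) (Rpuv p) b₀ * uu p
                  + algebraMap (ZMod p) (Rpuv p) c₀ * vv p)
              - algebraMap (ZMod p) (Rpuv p) c₀
                * (algebraMap (ZMod p) (Rpuv p) b₁ * uu p
                  + algebraMap (ZMod p) (Rpuv p) c₁ * vv p)
              = algebraMap (ZMod p) (Rpuv p) (b₀ * c₁ - b₁ * c₀) * uu p := by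
            simp only [map_sub, map_mul]; ring
          rw [h7] at h6
          have h8 := I.mul_mem_left (algebraMap (ZMod p) (Rpuv p) (b₀ * c₁ - b₁ * c₀)⁻¹) h6
          rwa [← mul_assoc, ← map_mul, inv_mul_cancel₀ hdet', map_one, one_mul] at h8
        have hVI : vv p ∈ I := by
          have h6 := I.sub_mem
            (I.mul_mem_left (algebraMap (ZMod p) (Rpuv p) b₀) hy₁)
            (I.mul_mem_left (algebraMap (ZMod p) (Rpuv p) b₁) hy₀)
          have h7 : algebraMap (ZMod p) (Rpuv p) b₀
                * (algebraMap (ZMod p) (Rpuv p) b₁ * uu p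
                  + algebraMap (ZMod p) (Rpuv p) c₁ * vv p)
              - algebraMap (ZMod p) (Rpuv p) b₁
                * (algebraMap (ZMod p) (Rpuv p) b₀ * uu p
                  + algebraMap (ZMod p) (Rpuv p) c₀ * vv p)
              = algebraMap (ZMod p) (Rpuv p) (b₀ * c₁ - b₁ * c₀) * vv p := by
            simp only [map_sub, map_mul]; ring
          rw [h7] at h6
          have h8 := I.mul_mem_left (algebraMap (ZMod p) (Rpuv p) (b₀ * c₁ - b₁ * c₀)⁻¹) h6
          rwa [← mul_assoc, ← map_mul, inv_mul_cancel₀ hdet', map_one, one_mul] at h8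
        refine Or.inr (Or.inr (Or.inr (Or.inr (Or.inr (Or.inl ?_)))))
        apply le_antisymm
        · intro x hx
          have hxr := co_spec p x
          rw [hT x hx, map_zero, zero_add] at hxr
          rw [hxr]
          have hum : uu p ∈ Ideal.span {uu p, vv p} :=
            Ideal.subset_span (Set.mem_insert _ _)
          have hvm : vv p ∈ Ideal.span {uu p, vv p} :=
            Ideal.subset_span (Set.mem_insert_of_mem _ rfl)
          exact add_mem (add_mem (Ideal.mul_mem_left _ _ hum) (Ideal.mul_mem_left _ _ hvm))
            (Ideal.mul_mem_left _ _ (Ideal.mul_mem_left _ _ hvm))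
        · rw [Ideal.span_le]
          rintro y hy
          simp only [Set.mem_insert_iff, Set.mem_singleton_iff] at hy
          rcases hy with rfl | rfl
          · exact hUI
          · exact hVI
      · push_neg at hpar
        by_cases hb₀ : b₀ = 0
        · -- I = span {v}
          have hc₀ : c₀ ≠ 0 := by
            rcases hbc₀ with hb | hc
            · exact absurd hb₀ hb
            · exact hc
          have hVI : vv p ∈ I := by
            have h9 : algebraMap (ZMod p) (Rpuv p) c₀ * vv p ∈ I := by
              have := hy₀
              rwa [hb₀, map_zero, zero_mul, zero_add] at this
            have h10 := I.mul_mem_left (algebraMap (ZMod p) (Rpuv p) c₀⁻¹) h9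
            rwa [← mul_assoc, ← map_mul, inv_mul_cancel₀ hc₀, map_one, one_mul] at h10
          refine Or.inr (Or.inr (Or.inl ?_))
          apply le_antisymm
          · intro x hx
            have hxr := co_spec p x
            rw [hT x hx, map_zero, zero_add] at hxr
            have hbx : co2 p x = 0 := by
              have h13 := hpar x hx
              rw [hb₀, zero_mul, zero_sub, neg_eq_zero, mul_eq_zero] at h13
              exact h13.resolve_right hc₀
            rw [hbx, map_zero, zero_mul, zero_add] at hxr
            rw [hxr, Ideal.mem_span_singleton]
            exact ⟨algebraMap (ZMod p) (Rpuv p) (co3 p x)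
              + algebraMap (ZMod p) (Rpuv p) (co4 p x) * uu p, by ring⟩
          · rw [Ideal.span_singleton_le_iff_mem]; exact hVI
        · by_cases hc0 : c₀ = 0
          · -- I = span {u}
            have hUI : uu p ∈ I := by
              have h9 : algebraMap (ZMod p) (Rpuv p) b₀ * uu p ∈ I := by
                have := hy₀
                rwa [hc0, map_zero, zero_mul, add_zero] at this
              have h10 := I.mul_mem_left (algebraMap (ZMod p) (Rpuv p) b₀⁻¹) h9
              rwa [← mul_assoc, ← map_mul, inv_mul_cancel₀ hb₀, map_one, one_mul] at h10
            refine Or.inr (Or.inl ?_)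
            apply le_antisymm
            · intro x hx
              have hxr := co_spec p x
              rw [hT x hx, map_zero, zero_add] at hxr
              have hcx : co3 p x = 0 := by
                have h13 := hpar x hx
                rw [hc0, mul_zero, sub_zero, mul_eq_zero] at h13
                exact h13.resolve_left hb₀
              rw [hcx, map_zero, zero_mul, add_zero] at hxr
              rw [hxr, Ideal.mem_span_singleton]
              exact ⟨algebraMap (ZMod p) (Rpuv p) (co2 p x)
                + algebraMap (ZMod p) (Rpuv p) (co4 p x) * vv p, by ring⟩
            · rw [Ideal.span_singleton_le_iff_mem]; exact hUI
          · -- I = span {u + α v}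
            refine Or.inr (Or.inr (Or.inr (Or.inr (Or.inl ?_))))
            refine ⟨c₀ * b₀⁻¹, mul_ne_zero hc0 (inv_ne_zero hb₀), ?_⟩
            have hgI : uu p + algebraMap (ZMod p) (Rpuv p) (c₀ * b₀⁻¹) * vv p ∈ I := by
              have h11 := I.mul_mem_left (algebraMap (ZMod p) (Rpuv p) b₀⁻¹) hy₀
              have h12 : algebraMap (ZMod p) (Rpuv p) b₀⁻¹
                  * (algebraMap (ZMod p) (Rpuv p) b₀ * uu p
                    + algebraMap (ZMod p) (Rpuv p) c₀ * vv p)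
                  = uu p + algebraMap (ZMod p) (Rpuv p) (c₀ * b₀⁻¹) * vv p := by
                rw [mul_add, ← mul_assoc, ← map_mul, inv_mul_cancel₀ hb₀, map_one, one_mul,
                  ← mul_assoc, ← map_mul, mul_comm b₀⁻¹ c₀]
              rwa [h12] at h11
            apply le_antisymm
            · intro x hx
              have hxr := co_spec p x
              set bx := co2 p x with hbxdef
              set cx := co3 p x with hcxdef
              set dx := co4 p x with hdxdef
              rw [hT x hx, map_zero, zero_add] at hxr
              have hcx : cx = bx * (c₀ * b₀⁻¹) := by
                have h14 : b₀ * cx = bx * c₀ := by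
                  linear_combination hpar x hx
                field_simp
                linear_combination h14
              rw [Ideal.mem_span_singleton]
              refine ⟨algebraMap (ZMod p) (Rpuv p) bx
                + algebraMap (ZMod p) (Rpuv p) dx * vv p, ?_⟩
              rw [hxr, hcx]
              simp only [map_mul]
              linear_combination (-(algebraMap (ZMod p) (Rpuv p) c₀
                  * algebraMap (ZMod p) (Rpuv p) b₀⁻¹)
                * algebraMap (ZMod p) (Rpuv p) dx) * vv_sq p
            · rw [Ideal.span_singleton_le_iff_mem]; exact hgI
    · push_neg at hbc
      by_cases hd : ∃ x ∈ I, co4 p x ≠ 0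
      · -- I = span {u * v}
        refine Or.inr (Or.inr (Or.inr (Or.inl ?_)))
        obtain ⟨x₂, hx₂I, hd₂⟩ := hd
        have hx₂ := co_spec p x₂
        set d₂ := co4 p x₂ with hd₂def
        rw [hT x₂ hx₂I, (hbc x₂ hx₂I).1, (hbc x₂ hx₂I).2] at hx₂
        simp only [map_zero, zero_add, zero_mul, add_zero] at hx₂
        have hUV : uu p * vv p ∈ I := by
          have h := I.mul_mem_left (algebraMap (ZMod p) (Rpuv p) d₂⁻¹) hx₂I
          rwa [hx₂, ← mul_assoc, ← map_mul, inv_mul_cancel₀ hd₂, map_one, one_mul] at h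
        apply le_antisymm
        · intro x hx
          have hxr := co_spec p x
          rw [hT x hx, (hbc x hx).1, (hbc x hx).2] at hxr
          simp only [map_zero, zero_add, zero_mul, add_zero] at hxr
          rw [hxr, Ideal.mem_span_singleton]
          exact ⟨algebraMap (ZMod p) (Rpuv p) (co4 p x), mul_comm _ _⟩
        · rw [Ideal.span_singleton_le_iff_mem]; exact hUV
      · push_neg at hd
        refine Or.inl ?_
        rw [eq_bot_iff]
        intro x hx
        have hxr := co_spec p x
        rw [hT x hx, (hbc x hx).1, (hbc x hx).2, hd x hx] at hxr
        simp only [map_zero, zero_add, zero_mul, add_zero] at hxr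
        rw [Ideal.mem_bot]
        exact hxr
end
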